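/- arXiv:2109.02733 — 3 statements merged into one kernel-verified Lean document; each statement's English description precedes it below -/
import Mathlib

section
/- Every finite tree T with maximum degree at most 4 admits a straight model (s-model), i.e., there exists an injective map φ : V(T) → ℤ × ℤ drawing each edge as a horizontal or vertical straight grid segment such that the segments drawn for distinct edges intersect only at the image of a common endpoint of those edges. -/
open SimpleGraph

/-- The closed axis-parallel grid segment (bounding box) with corners `p` and `q`.
For axis-aligned `p`, `q` this is exactly the straight segment joining them. -/
def seg (p q : ℤ × ℤ) : Set (ℤ × ℤ) :=
  {r | r.1 ∈ Set.uIcc p.1 q.1 ∧ r.2 ∈ Set.uIcc p.2 q.2}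

/-- A straight model (s-model) of a graph `G`: an injective drawing of the vertices on the
grid `ℤ × ℤ` such that every edge is a horizontal or vertical straight segment, and segments
of distinct edges meet only at the image of a common endpoint. -/
structure SModel {V : Type*} (G : SimpleGraph V) where
  toFun : V → ℤ × ℤ
  inj : Function.Injective toFun
  axisAligned : ∀ ⦃u v : V⦄, G.Adj u v →
    ((toFun u).1 = (toFun v).1 ∧ (toFun u).2 ≠ (toFun v).2) ∨
    ((toFun u).2 = (toFun v).2 ∧ (toFun u).1 ≠ (toFun v).1)
  noCross : ∀ ⦃u v x y : V⦄, G.Adj u v → G.Adj x y → s(u, v) ≠ s(x, y) →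
    ∀ r ∈ seg (toFun u) (toFun v) ∩ seg (toFun x) (toFun y),
      ∃ w : V, (w = u ∨ w = v) ∧ (w = x ∨ w = y) ∧ toFun w = r

/-- The drawing `φ` bends at `b` when passing `a, b, c`: one of the two segments is
vertical and the other horizontal. -/
def bendAt {V : Type*} (φ : V → ℤ × ℤ) (a b c : V) : Prop :=
  ((φ a).1 = (φ b).1 ∧ (φ b).2 = (φ c).2) ∨
  ((φ a).2 = (φ b).2 ∧ (φ b).1 = (φ c).1)

instance {V : Type*} (φ : V → ℤ × ℤ) (a b c : V) : Decidable (bendAt φ a b c) := by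
  unfold bendAt; infer_instance

/-- The list of internal vertices, in order, at which the drawing of the given vertex list
bends. -/
def bendVertices {V : Type*} (φ : V → ℤ × ℤ) : List V → List V
  | a :: b :: c :: rest =>
      (if bendAt φ a b c then [b] else []) ++ bendVertices φ (b :: c :: rest)
  | _ => []

/-- The number of bends of (the drawing of) a vertex list. -/
def bends {V : Type*} (φ : V → ℤ × ℤ) (L : List V) : ℕ :=
  (bendVertices φ L).length

section Defs

variable {V : Type*} [Fintype V]

/-- `b(φ)`: the maximum number of bends over all leaf-to-leaf paths (0 if there are none). -/
noncomputable def bendNum {G : SimpleGraph V} [DecidableRel G.Adj] (M : SModel G) : ℕ :=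
  sSup {n | ∃ (a b : V) (W : G.Walk a b), W.IsPath ∧ G.degree a = 1 ∧ G.degree b = 1 ∧
    bends M.toFun W.support = n}

/-- `b(T)`: the minimum of `b(φ)` over all s-models `φ`. -/
noncomputable def treeBendNum (G : SimpleGraph V) [DecidableRel G.Adj] : ℕ :=
  sInf {n | ∃ M : SModel G, bendNum M = n}

/-- `b^ℓ_φ(p, v)`: the maximum number of bends over all paths from `p` to a leaf that
contain `v`. -/
noncomputable def leafBend {G : SimpleGraph V} [DecidableRel G.Adj] (M : SModel G)
    (p v : V) : ℕ :=
  sSup {n | ∃ (f : V) (W : G.Walk p f), W.IsPath ∧ G.degree f = 1 ∧ v ∈ W.support ∧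
    bends M.toFun W.support = n}

/-- `b^ℓ_T(p, v)`: the minimum of `b^ℓ_φ(p, v)` over all s-models `φ`. -/
noncomputable def leafBendMin (G : SimpleGraph V) [DecidableRel G.Adj] (p v : V) : ℕ :=
  sInf {n | ∃ M : SModel G, leafBend M p v = n}

/-- `b_φ(v)`: the maximum number of bends over all leaf-to-leaf paths containing `v`. -/
noncomputable def bendNumAt {G : SimpleGraph V} [DecidableRel G.Adj] (M : SModel G)
    (v : V) : ℕ :=
  sSup {n | ∃ (a b : V) (W : G.Walk a b), W.IsPath ∧ G.degree a = 1 ∧ G.degree b = 1 ∧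
    v ∈ W.support ∧ bends M.toFun W.support = n}

/-- `p`, `q`, `r` lie on a common horizontal or vertical grid line. -/
def collinearGrid (p q r : ℤ × ℤ) : Prop :=
  (p.1 = q.1 ∧ q.1 = r.1) ∨ (p.2 = q.2 ∧ q.2 = r.2)

/-- `v` is balanced in the s-model `M`: either it has degree at most 1, or two neighbors
realizing the two largest values of `b^ℓ_M(v, ·)` are drawn collinearly with `v`. -/
def BalancedAt {G : SimpleGraph V} [DecidableRel G.Adj] (M : SModel G) (v : V) : Prop :=
  G.degree v ≤ 1 ∨
  ∃ u1 u2 : V, u1 ≠ u2 ∧ G.Adj v u1 ∧ G.Adj v u2 ∧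
    collinearGrid (M.toFun u1) (M.toFun v) (M.toFun u2) ∧
    ∀ w : V, G.Adj v w → w ≠ u1 → w ≠ u2 →
      leafBend M v w ≤ min (leafBend M v u1) (leafBend M v u2)

/-- The value `b^ℓ_M(v, u)` of a real or virtual (`none`) neighbor `u` of `v`; virtual
neighbors have value `-1`. -/
noncomputable def optVal {G : SimpleGraph V} [DecidableRel G.Adj] (M : SModel G) (v : V) :
    Option V → ℤ
  | none => -1
  | some u => (leafBend M v u : ℤ)

/-- `u1` and `u2` are the first two entries of a nonincreasing (w.r.t. `b^ℓ_M(v, ·)`)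
ordering of the real neighbors of `v` other than `p`, padded at the end with virtual
neighbors `none`. -/
def TopTwo {G : SimpleGraph V} [DecidableRel G.Adj] (M : SModel G) (p v : V) :
    Option V → Option V → Prop
  | none, u2 => u2 = none ∧ ∀ w, G.Adj v w → w = p
  | some a, none => G.Adj v a ∧ a ≠ p ∧ ∀ w, G.Adj v w → w ≠ p → w = a
  | some a, some b => G.Adj v a ∧ a ≠ p ∧ G.Adj v b ∧ b ≠ p ∧ a ≠ b ∧
      leafBend M v b ≤ leafBend M v a ∧
      ∀ w, G.Adj v w → w ≠ p → w ≠ a → w ≠ b → leafBend M v w ≤ leafBend M v b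

/-- Criticality of an ordered pair in an s-model `M`: every pair `(p, ∅)` is critical, and an
ordered edge `(p, v)` is critical if, for the first two entries `u1, u2` of some nonincreasing
ordering of the other neighbors of `v`, either `b^ℓ_M(p,v) = b^1` and `(v, u1)` is critical, or
`b^ℓ_M(p,v) = b^2 + 1` and both `(v, u1)` and `(v, u2)` are critical. -/
inductive Critical {G : SimpleGraph V} [DecidableRel G.Adj] (M : SModel G) :
    V → Option V → Prop
  | base (p : V) : Critical M p none
  | top1 (p v : V) (u1 u2 : Option V) (hadj : G.Adj p v)
      (htop : TopTwo M p v u1 u2)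
      (hb : (leafBend M p v : ℤ) = optVal M v u1)
      (hc : Critical M v u1) : Critical M p (some v)
  | top2 (p v : V) (u1 u2 : Option V) (hadj : G.Adj p v)
      (htop : TopTwo M p v u1 u2)
      (hb : (leafBend M p v : ℤ) = optVal M v u2 + 1)
      (hc1 : Critical M v u1) (hc2 : Critical M v u2) : Critical M p (some v)

end Defs

/-- Membership in the class of trees of the statement: a tree with maximum degree at most 4
having a vertex `r` of degree exactly 2 with distinct neighbors `r1`, `r2`, admitting a
balanced s-model `M` with `b^ℓ_M(r,r1) = b^ℓ_M(r,r2) = k - 1`. -/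
def ClassProp (k : ℕ) (V : Type) [Fintype V] (G : SimpleGraph V)
    [DecidableRel G.Adj] : Prop :=
  G.IsTree ∧ (∀ v, G.degree v ≤ 4) ∧
  ∃ (r r1 r2 : V) (M : SModel G),
    G.degree r = 2 ∧ G.Adj r r1 ∧ G.Adj r r2 ∧ r1 ≠ r2 ∧
    (∀ v, BalancedAt M v) ∧ leafBend M r r1 = k - 1 ∧ leafBend M r r2 = k - 1

/-- The full binary tree of height `k`, with vertex set the lists over `Bool` of length at
most `k`, rooted at the empty list; children of `l` are the lists `c :: l`. -/
def fullBinTree (k : ℕ) : SimpleGraph {l : List Bool // l.length ≤ k} :=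
  SimpleGraph.fromRel (fun a b => ∃ c : Bool, (b : List Bool) = c :: (a : List Bool))

/-- A tree with maximum degree at most 4 and minimum bend number `k`. -/
def TreeProp (k : ℕ) (V : Type) [Fintype V] (G : SimpleGraph V)
    [DecidableRel G.Adj] : Prop :=
  G.IsTree ∧ (∀ v, G.degree v ≤ 4) ∧ treeBendNum G = k

/-- The grid graph on `ℤ × ℤ`: two grid points are adjacent iff their distance is 1. -/
def gridGraph : SimpleGraph (ℤ × ℤ) :=
  SimpleGraph.fromRel (fun p q =>
    (p.1 = q.1 ∧ (p.2 - q.2).natAbs = 1) ∨ (p.2 = q.2 ∧ (p.1 - q.1).natAbs = 1))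

/-- `G` is a `B_k`-EPG graph: it has an EPG model by grid paths each with at most `k` bends;
distinct vertices are adjacent iff the corresponding grid paths share a grid edge. -/
def IsBkEPG {X : Type*} (G : SimpleGraph X) (k : ℕ) : Prop :=
  ∃ (s t : X → ℤ × ℤ) (P : ∀ x : X, gridGraph.Walk (s x) (t x)),
    (∀ x, (P x).IsPath) ∧ (∀ x, bends (id : ℤ × ℤ → ℤ × ℤ) (P x).support ≤ k) ∧
    ∀ x y : X, x ≠ y → (G.Adj x y ↔ ∃ e, e ∈ (P x).edges ∧ e ∈ (P y).edges)

/-- `⟨T, (Q x)_{x}⟩` is a VPT model of `G`: the `Q x` are pairwise distinct paths of the host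
tree `T`, and distinct vertices of `G` are adjacent iff their paths share a vertex of `T`. -/
def IsVPTModel {X W : Type*} (G : SimpleGraph X) (T : SimpleGraph W)
    (s t : X → W) (Q : ∀ x : X, T.Walk (s x) (t x)) : Prop :=
  (∀ x, (Q x).IsPath) ∧
  (∀ x y : X, x ≠ y → {w : W | w ∈ (Q x).support} ≠ {w : W | w ∈ (Q y).support}) ∧
  (∀ x y : X, x ≠ y → (G.Adj x y ↔ ∃ w : W, w ∈ (Q x).support ∧ w ∈ (Q y).support))

/-- A host tree with maximum degree at most 3 and minimum bend number `k`. -/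
def HostProp (k : ℕ) (W : Type) [Fintype W] (T : SimpleGraph W)
    [DecidableRel T.Adj] : Prop :=
  T.IsTree ∧ (∀ v, T.degree v ≤ 3) ∧ treeBendNum T = k



lemma mem_seg' {p q r : ℤ × ℤ} :
    r ∈ seg p q ↔ ((p.1 ≤ r.1 ∧ r.1 ≤ q.1) ∨ (q.1 ≤ r.1 ∧ r.1 ≤ p.1)) ∧
      ((p.2 ≤ r.2 ∧ r.2 ≤ q.2) ∨ (q.2 ≤ r.2 ∧ r.2 ≤ p.2)) := by
  simp [seg, Set.mem_uIcc]

lemma left_mem_seg (p q : ℤ × ℤ) : p ∈ seg p q := by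
  rw [mem_seg']; omega

lemma seg_comm (p q : ℤ × ℤ) : seg p q = seg q p := by
  ext r; rw [mem_seg', mem_seg']; constructor <;> (intro h; omega)

lemma SModel.inter_eq {V : Type*} {G : SimpleGraph V} (M : SModel G) {u v x y : V}
    (huv : G.Adj u v) (hxy : G.Adj x y) (hne : s(u, v) ≠ s(x, y)) {r₁ r₂ : ℤ × ℤ}
    (h₁ : r₁ ∈ seg (M.toFun u) (M.toFun v) ∩ seg (M.toFun x) (M.toFun y))
    (h₂ : r₂ ∈ seg (M.toFun u) (M.toFun v) ∩ seg (M.toFun x) (M.toFun y)) :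
    r₁ = r₂ := by
  obtain ⟨w₁, hw₁uv, hw₁xy, hw₁⟩ := M.noCross huv hxy hne r₁ h₁
  obtain ⟨w₂, hw₂uv, hw₂xy, hw₂⟩ := M.noCross huv hxy hne r₂ h₂
  by_cases hw : w₁ = w₂
  · rw [← hw₁, ← hw₂, hw]
  · exfalso
    have e₁ : s(u, v) = s(w₁, w₂) := by
      rcases hw₁uv with rfl | rfl <;> rcases hw₂uv with rfl | rfl
      · exact absurd rfl hw
      · rfl
      · exact Sym2.eq_swap.symm
      · exact absurd rfl hw
    have e₂ : s(x, y) = s(w₁, w₂) := by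
      rcases hw₁xy with rfl | rfl <;> rcases hw₂xy with rfl | rfl
      · exact absurd rfl hw
      · rfl
      · exact Sym2.eq_swap.symm
      · exact absurd rfl hw
    exact hne (e₁.trans e₂.symm)

set_option maxHeartbeats 1000000 in
def SModel.scale {V : Type*} {G : SimpleGraph V} (M : SModel G) : SModel G where
  toFun v := (5 * (M.toFun v).1, 5 * (M.toFun v).2)
  inj a b hab := by
    apply M.inj
    have h1 := congrArg Prod.fst hab
    have h2 := congrArg Prod.snd hab
    dsimp only at h1 h2
    exact Prod.ext (by omega) (by omega)
  axisAligned u v h := by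
    rcases M.axisAligned h with ⟨h1, h2⟩ | ⟨h1, h2⟩
    · exact Or.inl ⟨by dsimp only; omega, by dsimp only; intro h'; exact h2 (by omega)⟩
    · exact Or.inr ⟨by dsimp only; omega, by dsimp only; intro h'; exact h2 (by omega)⟩
  noCross u v x y huv hxy hne r hr := by
    obtain ⟨hruv, hrxy⟩ := hr
    rw [mem_seg'] at hruv hrxy
    dsimp only at hruv hrxy
    have hcm : ((((M.toFun u).1 ⊓ (M.toFun v).1) ⊔ ((M.toFun x).1 ⊓ (M.toFun y).1)),
        (((M.toFun u).2 ⊓ (M.toFun v).2) ⊔ ((M.toFun x).2 ⊓ (M.toFun y).2))) ∈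
        seg (M.toFun u) (M.toFun v) ∩ seg (M.toFun x) (M.toFun y) :=
      ⟨mem_seg'.mpr (by dsimp only; omega), mem_seg'.mpr (by dsimp only; omega)⟩
    have hdm : ((((M.toFun u).1 ⊔ (M.toFun v).1) ⊓ ((M.toFun x).1 ⊔ (M.toFun y).1)),
        (((M.toFun u).2 ⊔ (M.toFun v).2) ⊓ ((M.toFun x).2 ⊔ (M.toFun y).2))) ∈
        seg (M.toFun u) (M.toFun v) ∩ seg (M.toFun x) (M.toFun y) :=
      ⟨mem_seg'.mpr (by dsimp only; omega), mem_seg'.mpr (by dsimp only; omega)⟩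
    have hcd := M.inter_eq huv hxy hne hcm hdm
    have hcd1 := congrArg Prod.fst hcd
    have hcd2 := congrArg Prod.snd hcd
    dsimp only at hcd1 hcd2
    obtain ⟨w, hwuv, hwxy, hw⟩ := M.noCross huv hxy hne _ hcm
    refine ⟨w, hwuv, hwxy, ?_⟩
    have hw1 := congrArg Prod.fst hw
    have hw2 := congrArg Prod.snd hw
    dsimp only at hw1 hw2
    refine Prod.ext ?_ ?_ <;> (dsimp only; omega)

lemma leaf_not_mem_path_support {V : Type*} {G : SimpleGraph V} [DecidableEq V]
    {a b ℓ u₀ : V} (hu : ∀ w, G.Adj ℓ w → w = u₀) {p : G.Walk a b} (hp : p.IsPath)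
    (ha : a ≠ ℓ) (hb : b ≠ ℓ) : ℓ ∉ p.support := by
  intro h
  have hspec := p.take_spec h
  have hqnil : ¬ (p.takeUntil ℓ h).reverse.Nil :=
    SimpleGraph.Walk.not_nil_of_ne (Ne.symm ha)
  have hrnil : ¬ (p.dropUntil ℓ h).Nil :=
    SimpleGraph.Walk.not_nil_of_ne (Ne.symm hb)
  obtain ⟨z₁, hadj₁, q₁, hq₁⟩ := SimpleGraph.Walk.not_nil_iff.mp hqnil
  obtain ⟨z₂, hadj₂, r₁, hr₁⟩ := SimpleGraph.Walk.not_nil_iff.mp hrnil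
  have hz₁ := hu _ hadj₁
  have hz₂ := hu _ hadj₂
  have h1 : u₀ ∈ (p.takeUntil ℓ h).support := by
    rw [← List.mem_reverse, ← SimpleGraph.Walk.support_reverse, hq₁,
      SimpleGraph.Walk.support_cons, ← hz₁]
    exact List.mem_cons_of_mem _ q₁.start_mem_support
  have h2 : u₀ ∈ (p.dropUntil ℓ h).support.tail := by
    rw [hr₁, SimpleGraph.Walk.support_cons, List.tail_cons, ← hz₂]
    exact r₁.start_mem_support
  have hnd := hp.support_nodup
  rw [← hspec, SimpleGraph.Walk.support_append] at hnd
  exact ((List.nodup_append'.mp hnd).2.2) h1 h2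

lemma reachable_comap_of_avoid {V : Type*} {G : SimpleGraph V} {ℓ : V} :
    ∀ {a b : V} (p : G.Walk a b), ℓ ∉ p.support → ∀ (ha : a ≠ ℓ) (hb : b ≠ ℓ),
      (G.comap (Subtype.val : {v : V // v ≠ ℓ} → V)).Reachable ⟨a, ha⟩ ⟨b, hb⟩ := by
  intro a b p
  induction p with
  | nil => intro _ ha hb; exact SimpleGraph.Reachable.refl _
  | @cons a c b h q ih =>
    intro hs ha hb
    rw [SimpleGraph.Walk.support_cons, List.mem_cons] at hs
    push_neg at hs
    have hc : c ≠ ℓ := fun hcℓ => hs.2 (hcℓ ▸ q.start_mem_support)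
    have hadj' : (G.comap (Subtype.val : {v : V // v ≠ ℓ} → V)).Adj ⟨a, ha⟩ ⟨c, hc⟩ := h
    exact hadj'.reachable.trans (ih hs.2 hc hb)

set_option maxHeartbeats 2000000 in
lemma extend_model {V : Type*} [Fintype V] {G : SimpleGraph V} [DecidableRel G.Adj]
    {ℓ u₀ : V} (hadjℓ : ∀ w, G.Adj ℓ w ↔ w = u₀) (hu₀ℓ : u₀ ≠ ℓ)
    (hconn : G.Connected) (hdeg : G.degree u₀ ≤ 4)
    (M0 : SModel (G.comap (Subtype.val : {v : V // v ≠ ℓ} → V))) :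
    Nonempty (SModel G) := by
  classical
  set G' := G.comap (Subtype.val : {v : V // v ≠ ℓ} → V) with hG'
  set M := M0.scale with hM
  have h5c : ∀ v', ((M.toFun v').1 = 5 * (M0.toFun v').1 ∧
      (M.toFun v').2 = 5 * (M0.toFun v').2) := fun _ => ⟨rfl, rfl⟩
  have hadju : G.Adj ℓ u₀ := (hadjℓ u₀).mpr rfl
  -- no segment of the model passes through the image of u₀ unless incident to it
  have hno_through : ∀ x y : {v : V // v ≠ ℓ}, G'.Adj x y →
      (⟨u₀, hu₀ℓ⟩ : {v : V // v ≠ ℓ}) ≠ x → (⟨u₀, hu₀ℓ⟩ : {v : V // v ≠ ℓ}) ≠ y →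
      M.toFun ⟨u₀, hu₀ℓ⟩ ∉ seg (M.toFun x) (M.toFun y) := by
    intro x y hxy hnx hny hmem
    obtain ⟨w0⟩ := hconn.preconnected u₀ x.1
    have hp : w0.bypass.IsPath := w0.bypass_isPath
    have hℓp : ℓ ∉ w0.bypass.support :=
      leaf_not_mem_path_support (fun w hw => (hadjℓ w).mp hw) hp hu₀ℓ x.2
    have hne' : u₀ ≠ x.1 := fun h => hnx (Subtype.ext h)
    have hnn : ¬ w0.bypass.Nil := SimpleGraph.Walk.not_nil_of_ne hne'
    have hzadj : G.Adj u₀ (w0.bypass.getVert 1) := w0.bypass.adj_snd hnn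
    have hzsup : w0.bypass.getVert 1 ∈ w0.bypass.support :=
      SimpleGraph.Walk.mem_support_iff_exists_getVert.mpr ⟨1, rfl, by
        have := SimpleGraph.Walk.not_nil_iff_lt_length.mp hnn; omega⟩
    have hzℓ : w0.bypass.getVert 1 ≠ ℓ := by
      intro hh
      have h' := hzsup
      rw [hh] at h'
      exact hℓp h'
    have hzadj' : G'.Adj ⟨u₀, hu₀ℓ⟩ ⟨w0.bypass.getVert 1, hzℓ⟩ := hzadj
    by_cases heq : s((⟨u₀, hu₀ℓ⟩ : {v : V // v ≠ ℓ}), ⟨w0.bypass.getVert 1, hzℓ⟩) = s(x, y)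
    · rcases Sym2.eq_iff.mp heq with ⟨h1, -⟩ | ⟨h1, -⟩
      · exact hnx h1
      · exact hny h1
    · obtain ⟨w', hw1, hw2, hw3⟩ := M.noCross hzadj' hxy heq (M.toFun ⟨u₀, hu₀ℓ⟩)
        ⟨left_mem_seg _ _, hmem⟩
      have hwu : w' = ⟨u₀, hu₀ℓ⟩ := by
        rcases hw1 with rfl | rfl
        · rfl
        · exact M.inj hw3
      rw [hwu] at hw2
      rcases hw2 with h | h
      · exact hnx h
      · exact hny h
  -- u₀ has at most 3 neighbours in G'
  have hℓmem : ℓ ∈ G.neighborFinset u₀ := by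
    rw [SimpleGraph.mem_neighborFinset]; exact hadju.symm
  have hsub3 : ((G'.neighborFinset ⟨u₀, hu₀ℓ⟩).image Subtype.val) ⊆
      (G.neighborFinset u₀).erase ℓ := by
    intro w hw
    simp only [Finset.mem_image, SimpleGraph.mem_neighborFinset] at hw
    obtain ⟨zz, hzz, rfl⟩ := hw
    rw [Finset.mem_erase, SimpleGraph.mem_neighborFinset]
    exact ⟨zz.2, hzz⟩
  have hdeg3 : (G'.neighborFinset ⟨u₀, hu₀ℓ⟩).card ≤ 3 := by
    have h1 := Finset.card_le_card hsub3
    rw [Finset.card_image_of_injective _ Subtype.val_injective,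
      Finset.card_erase_of_mem hℓmem] at h1
    have h2 : (G.neighborFinset u₀).card = G.degree u₀ := rfl
    omega
  -- a neighbour blocks a unique direction
  have key_same : ∀ (w : {v : V // v ≠ ℓ}) (δ1 δ2 : ℤ × ℤ),
      (δ1 = (1,0) ∨ δ1 = (-1,0) ∨ δ1 = (0,1) ∨ δ1 = (0,-1)) →
      (δ2 = (1,0) ∨ δ2 = (-1,0) ∨ δ2 = (0,1) ∨ δ2 = (0,-1)) →
      G'.Adj ⟨u₀, hu₀ℓ⟩ w →
      M.toFun ⟨u₀, hu₀ℓ⟩ + δ1 ∈ seg (M.toFun ⟨u₀, hu₀ℓ⟩) (M.toFun w) →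
      M.toFun ⟨u₀, hu₀ℓ⟩ + δ2 ∈ seg (M.toFun ⟨u₀, hu₀ℓ⟩) (M.toFun w) → δ1 = δ2 := by
    intro w δ1 δ2 h1 h2 hadj hm1 hm2
    have haa := M.axisAligned hadj
    rw [mem_seg'] at hm1 hm2
    simp only [Prod.fst_add, Prod.snd_add] at hm1 hm2
    rcases h1 with rfl | rfl | rfl | rfl <;> rcases h2 with rfl | rfl | rfl | rfl <;>
      first
        | rfl
        | (exfalso; rcases haa with ⟨e1, e2⟩ | ⟨e1, e2⟩ <;> (dsimp only at hm1 hm2; omega))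
  -- a direction is blocked by at most one neighbour
  have key_diff : ∀ (δ : ℤ × ℤ), (δ = (1,0) ∨ δ = (-1,0) ∨ δ = (0,1) ∨ δ = (0,-1)) →
      ∀ w1 w2, G'.Adj ⟨u₀, hu₀ℓ⟩ w1 → G'.Adj ⟨u₀, hu₀ℓ⟩ w2 →
      M.toFun ⟨u₀, hu₀ℓ⟩ + δ ∈ seg (M.toFun ⟨u₀, hu₀ℓ⟩) (M.toFun w1) →
      M.toFun ⟨u₀, hu₀ℓ⟩ + δ ∈ seg (M.toFun ⟨u₀, hu₀ℓ⟩) (M.toFun w2) → w1 = w2 := by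
    intro δ hδ w1 w2 ha1 ha2 hm1 hm2
    by_contra hne12
    have hs : s((⟨u₀, hu₀ℓ⟩ : {v : V // v ≠ ℓ}), w1) ≠ s((⟨u₀, hu₀ℓ⟩ : {v : V // v ≠ ℓ}), w2) := by
      intro hss
      rcases Sym2.eq_iff.mp hss with ⟨-, h2⟩ | ⟨h1, h2⟩
      · exact hne12 h2
      · exact ha1.ne' h2
    obtain ⟨w', hw1, hw2, hw3⟩ := M.noCross ha1 ha2 hs _ ⟨hm1, hm2⟩
    have hδ0 : M.toFun ⟨u₀, hu₀ℓ⟩ + δ ≠ M.toFun ⟨u₀, hu₀ℓ⟩ := by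
      intro hh
      have h1 := congrArg Prod.fst hh
      have h2 := congrArg Prod.snd hh
      simp only [Prod.fst_add, Prod.snd_add] at h1 h2
      rcases hδ with rfl | rfl | rfl | rfl <;> (dsimp only at h1 h2; omega)
    have hwu : w' ≠ ⟨u₀, hu₀ℓ⟩ := fun hh => hδ0 (by rw [← hw3, hh])
    rcases hw1 with rfl | rfl
    · exact absurd rfl hwu
    · rcases hw2 with h | h
      · exact absurd h hwu
      · exact hne12 h
  -- a free direction exists
  have hfree : ∃ δ : ℤ × ℤ, (δ = (1,0) ∨ δ = (-1,0) ∨ δ = (0,1) ∨ δ = (0,-1)) ∧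
      ∀ w, G'.Adj ⟨u₀, hu₀ℓ⟩ w →
        M.toFun ⟨u₀, hu₀ℓ⟩ + δ ∉ seg (M.toFun ⟨u₀, hu₀ℓ⟩) (M.toFun w) := by
    by_contra hcon
    push_neg at hcon
    obtain ⟨w1, ha1, hm1⟩ := hcon (1,0) (Or.inl rfl)
    obtain ⟨w2, ha2, hm2⟩ := hcon (-1,0) (Or.inr (Or.inl rfl))
    obtain ⟨w3, ha3, hm3⟩ := hcon (0,1) (Or.inr (Or.inr (Or.inl rfl)))
    obtain ⟨w4, ha4, hm4⟩ := hcon (0,-1) (Or.inr (Or.inr (Or.inr rfl)))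
    have hd12 : w1 ≠ w2 := by
      intro h; subst h
      exact absurd (key_same w1 _ _ (Or.inl rfl) (Or.inr (Or.inl rfl)) ha1 hm1 hm2) (by decide)
    have hd13 : w1 ≠ w3 := by
      intro h; subst h
      exact absurd (key_same w1 _ _ (Or.inl rfl) (Or.inr (Or.inr (Or.inl rfl))) ha1 hm1 hm3) (by decide)
    have hd14 : w1 ≠ w4 := by
      intro h; subst h
      exact absurd (key_same w1 _ _ (Or.inl rfl) (Or.inr (Or.inr (Or.inr rfl))) ha1 hm1 hm4) (by decide)
    have hd23 : w2 ≠ w3 := by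
      intro h; subst h
      exact absurd (key_same w2 _ _ (Or.inr (Or.inl rfl)) (Or.inr (Or.inr (Or.inl rfl))) ha2 hm2 hm3) (by decide)
    have hd24 : w2 ≠ w4 := by
      intro h; subst h
      exact absurd (key_same w2 _ _ (Or.inr (Or.inl rfl)) (Or.inr (Or.inr (Or.inr rfl))) ha2 hm2 hm4) (by decide)
    have hd34 : w3 ≠ w4 := by
      intro h; subst h
      exact absurd (key_same w3 _ _ (Or.inr (Or.inr (Or.inl rfl))) (Or.inr (Or.inr (Or.inr rfl))) ha3 hm3 hm4) (by decide)
    have hsub : ({w1, w2, w3, w4} : Finset _) ⊆ G'.neighborFinset ⟨u₀, hu₀ℓ⟩ := by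
      intro w hw
      simp only [Finset.mem_insert, Finset.mem_singleton] at hw
      rw [SimpleGraph.mem_neighborFinset]
      rcases hw with rfl | rfl | rfl | rfl <;> assumption
    have hcard4 : ({w1, w2, w3, w4} : Finset _).card = 4 := by
      rw [Finset.card_insert_of_notMem (by simp [hd12, hd13, hd14]),
        Finset.card_insert_of_notMem (by simp [hd23, hd24]),
        Finset.card_insert_of_notMem (by simp [hd34]), Finset.card_singleton]
    have hle := Finset.card_le_card hsub
    rw [hcard4] at hle
    omega
  obtain ⟨δ, hδ4, hδfree⟩ := hfree
  -- the new drawing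
  set φ : V → ℤ × ℤ :=
    fun v => if h : v = ℓ then M.toFun ⟨u₀, hu₀ℓ⟩ + δ else M.toFun ⟨v, h⟩ with hφ
  have hφℓ : φ ℓ = M.toFun ⟨u₀, hu₀ℓ⟩ + δ := dif_pos rfl
  have hφne : ∀ (v : V) (h : v ≠ ℓ), φ v = M.toFun ⟨v, h⟩ := fun v h => dif_neg h
  -- intersections with the new tiny edge
  have hcaseB : ∀ (x y : {v : V // v ≠ ℓ}), G'.Adj x y → ∀ r : ℤ × ℤ,
      r ∈ seg (M.toFun ⟨u₀, hu₀ℓ⟩) (M.toFun ⟨u₀, hu₀ℓ⟩ + δ) →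
      r ∈ seg (M.toFun x) (M.toFun y) →
      r = M.toFun ⟨u₀, hu₀ℓ⟩ ∧ ((⟨u₀, hu₀ℓ⟩ : {v : V // v ≠ ℓ}) = x ∨ (⟨u₀, hu₀ℓ⟩ : {v : V // v ≠ ℓ}) = y) := by
    intro x y hxy r hr1 hr2
    have hrP : r = M.toFun ⟨u₀, hu₀ℓ⟩ ∨ r = M.toFun ⟨u₀, hu₀ℓ⟩ + δ := by
      rw [mem_seg'] at hr1
      simp only [Prod.fst_add, Prod.snd_add] at hr1
      simp only [Prod.ext_iff, Prod.fst_add, Prod.snd_add]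
      rcases hδ4 with rfl | rfl | rfl | rfl <;> (dsimp only at hr1 ⊢; omega)
    rcases hrP with rfl | rfl
    · refine ⟨rfl, ?_⟩
      by_contra hcon
      push_neg at hcon
      exact hno_through x y hxy hcon.1 hcon.2 hr2
    · exfalso
      have hPin : M.toFun ⟨u₀, hu₀ℓ⟩ ∈ seg (M.toFun x) (M.toFun y) := by
        obtain ⟨e1, e2⟩ := h5c ⟨u₀, hu₀ℓ⟩
        obtain ⟨f1, f2⟩ := h5c x
        obtain ⟨g1, g2⟩ := h5c y
        rw [mem_seg'] at hr2 ⊢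
        simp only [Prod.fst_add, Prod.snd_add] at hr2
        rcases hδ4 with rfl | rfl | rfl | rfl <;> (dsimp only at hr2 ⊢; omega)
      have hu₀xy : (⟨u₀, hu₀ℓ⟩ : {v : V // v ≠ ℓ}) = x ∨ (⟨u₀, hu₀ℓ⟩ : {v : V // v ≠ ℓ}) = y := by
        by_contra hcon
        push_neg at hcon
        exact hno_through x y hxy hcon.1 hcon.2 hPin
      rcases hu₀xy with rfl | rfl
      · exact hδfree y hxy hr2
      · refine hδfree x hxy.symm ?_
        rw [seg_comm] at hr2
        exact hr2
  -- the asymmetric key case for noCross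
  have key : ∀ u v x y : V, G.Adj u v → G.Adj x y → (u = ℓ ∨ v = ℓ) →
      ∀ (hxℓ : x ≠ ℓ) (hyℓ : y ≠ ℓ), ∀ r : ℤ × ℤ,
      r ∈ seg (φ u) (φ v) → r ∈ seg (φ x) (φ y) →
      ∃ w, (w = u ∨ w = v) ∧ (w = x ∨ w = y) ∧ φ w = r := by
    intro u v x y huv hxy hℓuv hxℓ hyℓ r h1 h2
    have huv' : (u = ℓ ∧ v = u₀) ∨ (v = ℓ ∧ u = u₀) := by
      rcases hℓuv with rfl | rfl
      · exact Or.inl ⟨rfl, (hadjℓ v).mp huv⟩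
      · exact Or.inr ⟨rfl, (hadjℓ u).mp huv.symm⟩
    have hseg1 : r ∈ seg (M.toFun ⟨u₀, hu₀ℓ⟩) (M.toFun ⟨u₀, hu₀ℓ⟩ + δ) := by
      rcases huv' with ⟨h₁, h₂⟩ | ⟨h₁, h₂⟩
      · rw [h₁, h₂, hφℓ, hφne u₀ hu₀ℓ, seg_comm] at h1; exact h1
      · rw [h₁, h₂, hφℓ, hφne u₀ hu₀ℓ] at h1; exact h1
    have h2' : r ∈ seg (M.toFun ⟨x, hxℓ⟩) (M.toFun ⟨y, hyℓ⟩) := by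
      rw [hφne x hxℓ, hφne y hyℓ] at h2; exact h2
    have hadj' : G'.Adj ⟨x, hxℓ⟩ ⟨y, hyℓ⟩ := hxy
    obtain ⟨hrP, hu₀xy⟩ := hcaseB ⟨x, hxℓ⟩ ⟨y, hyℓ⟩ hadj' r hseg1 h2'
    refine ⟨u₀, ?_, ?_, ?_⟩
    · rcases huv' with ⟨-, h'⟩ | ⟨-, h'⟩
      · exact Or.inr h'.symm
      · exact Or.inl h'.symm
    · rcases hu₀xy with h | h
      · exact Or.inl (congrArg Subtype.val h)
      · exact Or.inr (congrArg Subtype.val h)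
    · rw [hφne u₀ hu₀ℓ]; exact hrP.symm
  -- assemble the model
  refine ⟨⟨φ, ?_, ?_, ?_⟩⟩
  · -- injective
    intro a b hab
    by_cases haℓ : a = ℓ <;> by_cases hbℓ : b = ℓ
    · rw [haℓ, hbℓ]
    · exfalso
      rw [haℓ, hφℓ, hφne b hbℓ] at hab
      have h1 := congrArg Prod.fst hab
      have h2 := congrArg Prod.snd hab
      simp only [Prod.fst_add, Prod.snd_add] at h1 h2
      obtain ⟨e1, e2⟩ := h5c ⟨u₀, hu₀ℓ⟩
      obtain ⟨f1, f2⟩ := h5c ⟨b, hbℓ⟩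
      rcases hδ4 with rfl | rfl | rfl | rfl <;> (dsimp only at h1 h2; omega)
    · exfalso
      rw [hbℓ, hφℓ, hφne a haℓ] at hab
      have h1 := congrArg Prod.fst hab
      have h2 := congrArg Prod.snd hab
      simp only [Prod.fst_add, Prod.snd_add] at h1 h2
      obtain ⟨e1, e2⟩ := h5c ⟨u₀, hu₀ℓ⟩
      obtain ⟨f1, f2⟩ := h5c ⟨a, haℓ⟩
      rcases hδ4 with rfl | rfl | rfl | rfl <;> (dsimp only at h1 h2; omega)
    · rw [hφne a haℓ, hφne b hbℓ] at hab
      exact congrArg Subtype.val (M.inj hab)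
  · -- axis aligned
    intro u v huv
    by_cases huℓ : u = ℓ
    · subst huℓ
      have hv : v = u₀ := (hadjℓ v).mp huv
      rw [hv, hφℓ, hφne u₀ hu₀ℓ]
      rcases hδ4 with rfl | rfl | rfl | rfl <;>
        (simp only [Prod.fst_add, Prod.snd_add]; omega)
    · by_cases hvℓ : v = ℓ
      · subst hvℓ
        have hu : u = u₀ := (hadjℓ u).mp huv.symm
        rw [hu, hφℓ, hφne u₀ hu₀ℓ]
        rcases hδ4 with rfl | rfl | rfl | rfl <;>
          (simp only [Prod.fst_add, Prod.snd_add]; omega)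
      · rw [hφne u huℓ, hφne v hvℓ]
        exact M.axisAligned (show G'.Adj ⟨u, huℓ⟩ ⟨v, hvℓ⟩ from huv)
  · -- noCross
    intro u v x y huv hxy hne r hr
    obtain ⟨h1, h2⟩ := hr
    by_cases hℓuv : u = ℓ ∨ v = ℓ <;> by_cases hℓxy : x = ℓ ∨ y = ℓ
    · exfalso
      have e1 : s(u, v) = s(ℓ, u₀) := by
        rcases hℓuv with rfl | rfl
        · rw [(hadjℓ v).mp huv]
        · rw [(hadjℓ u).mp huv.symm]; exact Sym2.eq_swap
      have e2 : s(x, y) = s(ℓ, u₀) := by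
        rcases hℓxy with rfl | rfl
        · rw [(hadjℓ y).mp hxy]
        · rw [(hadjℓ x).mp hxy.symm]; exact Sym2.eq_swap
      exact hne (e1.trans e2.symm)
    · push_neg at hℓxy
      exact key u v x y huv hxy hℓuv hℓxy.1 hℓxy.2 r h1 h2
    · push_neg at hℓuv
      obtain ⟨w, hwa, hwb, hwr⟩ := key x y u v hxy huv hℓxy hℓuv.1 hℓuv.2 r h2 h1
      exact ⟨w, hwb, hwa, hwr⟩
    · push_neg at hℓuv hℓxy
      have hne' : s((⟨u, hℓuv.1⟩ : {v : V // v ≠ ℓ}), (⟨v, hℓuv.2⟩ : {v : V // v ≠ ℓ})) ≠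
          s((⟨x, hℓxy.1⟩ : {v : V // v ≠ ℓ}), (⟨y, hℓxy.2⟩ : {v : V // v ≠ ℓ})) := by
        intro hss
        apply hne
        rw [Sym2.eq_iff]
        rcases Sym2.eq_iff.mp hss with ⟨e1, e2⟩ | ⟨e1, e2⟩
        · exact Or.inl ⟨congrArg Subtype.val e1, congrArg Subtype.val e2⟩
        · exact Or.inr ⟨congrArg Subtype.val e1, congrArg Subtype.val e2⟩
      have hadj1 : G'.Adj ⟨u, hℓuv.1⟩ ⟨v, hℓuv.2⟩ := huv
      have hadj2 : G'.Adj ⟨x, hℓxy.1⟩ ⟨y, hℓxy.2⟩ := hxy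
      rw [hφne u hℓuv.1, hφne v hℓuv.2] at h1
      rw [hφne x hℓxy.1, hφne y hℓxy.2] at h2
      obtain ⟨w', hwa, hwb, hwr⟩ := M.noCross hadj1 hadj2 hne' r ⟨h1, h2⟩
      refine ⟨w'.1, ?_, ?_, ?_⟩
      · rcases hwa with h | h
        · exact Or.inl (congrArg Subtype.val h)
        · exact Or.inr (congrArg Subtype.val h)
      · rcases hwb with h | h
        · exact Or.inl (congrArg Subtype.val h)
        · exact Or.inr (congrArg Subtype.val h)
      · rw [hφne w'.1 w'.2]
        exact hwr

def trivialModel {V : Type*} [Subsingleton V] (G : SimpleGraph V) : SModel G where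
  toFun _ := (0, 0)
  inj a b _ := Subsingleton.elim a b
  axisAligned u v h := absurd (Subsingleton.elim u v) h.ne
  noCross u v _ _ h _ _ _ _ := absurd (Subsingleton.elim u v) h.ne

lemma aux_smodel : ∀ (n : ℕ) (V : Type u) [Fintype V] (G : SimpleGraph V)
    [DecidableRel G.Adj], Fintype.card V ≤ n → G.IsTree → (∀ v, G.degree v ≤ 4) →
    Nonempty (SModel G) := by
  intro n
  induction n with
  | zero =>
    intro V _ G _ hcard _ _
    have : Subsingleton V := Fintype.card_le_one_iff_subsingleton.mp (by omega)
    exact ⟨trivialModel G⟩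
  | succ n ih =>
    intro V _ G _ hcard hT hdeg
    classical
    by_cases h1 : Fintype.card V ≤ 1
    · have : Subsingleton V := Fintype.card_le_one_iff_subsingleton.mp h1
      exact ⟨trivialModel G⟩
    · push_neg at h1
      have hdeg1 : ∀ v : V, ∃ w, G.Adj v w := by
        intro v
        obtain ⟨w, hw⟩ := Fintype.exists_ne_of_one_lt_card h1 v
        obtain ⟨p⟩ := hT.isConnected.preconnected v w
        exact ⟨_, p.adj_snd (SimpleGraph.Walk.not_nil_of_ne (Ne.symm hw))⟩
      obtain ⟨ℓ, hℓ⟩ : ∃ ℓ : V, G.degree ℓ = 1 := by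
        by_contra hno
        push_neg at hno
        have h2 : ∀ v : V, 2 ≤ G.degree v := by
          intro v
          have ha := (G.degree_pos_iff_exists_adj v).mpr (hdeg1 v)
          have hb := hno v
          omega
        have hsum := G.sum_degrees_eq_twice_card_edges
        have hcnt := hT.card_edgeFinset
        have hle : 2 * Fintype.card V ≤ ∑ v, G.degree v := by
          calc 2 * Fintype.card V = ∑ _v : V, 2 := by
                rw [Finset.sum_const, Finset.card_univ]; ring
            _ ≤ ∑ v, G.degree v := Finset.sum_le_sum fun v _ => h2 v
        omega
      obtain ⟨u₀, hu₀⟩ : ∃ u₀, G.neighborFinset ℓ = {u₀} := Finset.card_eq_one.mp hℓ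
      have hadjℓ : ∀ w, G.Adj ℓ w ↔ w = u₀ := by
        intro w
        rw [← SimpleGraph.mem_neighborFinset, hu₀, Finset.mem_singleton]
      have hadju : G.Adj ℓ u₀ := (hadjℓ u₀).mpr rfl
      have hu₀ℓ : u₀ ≠ ℓ := hadju.ne'
      haveI : DecidableRel (G.comap (Subtype.val : {v : V // v ≠ ℓ} → V)).Adj :=
        fun a b => inferInstanceAs (Decidable (G.Adj a.1 b.1))
      have femb : (G.comap (Subtype.val : {v : V // v ≠ ℓ} → V)) ↪g G :=
        SimpleGraph.Embedding.comap (Function.Embedding.subtype _) G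
      have hT' : (G.comap (Subtype.val : {v : V // v ≠ ℓ} → V)).IsTree := by
        constructor
        · refine { preconnected := ?_, nonempty := ⟨⟨u₀, hu₀ℓ⟩⟩ }
          intro a b
          obtain ⟨w0⟩ := hT.isConnected.preconnected a.1 b.1
          have hp : w0.bypass.IsPath := w0.bypass_isPath
          have hℓp : ℓ ∉ w0.bypass.support :=
            leaf_not_mem_path_support (fun w hw => (hadjℓ w).mp hw) hp a.2 b.2
          have := reachable_comap_of_avoid w0.bypass hℓp a.2 b.2
          exact this
        · intro v c hc
          exact hT.IsAcyclic _
            ((SimpleGraph.Walk.map_isCycle_iff_of_injective (f := femb.toHom)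
              (show Function.Injective ⇑femb.toHom from femb.injective)).mpr hc)
      have hdeg' : ∀ v' : {v : V // v ≠ ℓ},
          (G.comap (Subtype.val : {v : V // v ≠ ℓ} → V)).degree v' ≤ 4 := by
        intro v'
        have hsub : (((G.comap (Subtype.val : {v : V // v ≠ ℓ} → V)).neighborFinset v').image
            Subtype.val) ⊆ G.neighborFinset v'.1 := by
          intro w hw
          simp only [Finset.mem_image, SimpleGraph.mem_neighborFinset] at hw
          obtain ⟨zz, hzz, rfl⟩ := hw
          rw [SimpleGraph.mem_neighborFinset]
          exact hzz
        have h1 := Finset.card_le_card hsub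
        rw [Finset.card_image_of_injective _ Subtype.val_injective] at h1
        exact h1.trans (hdeg v'.1)
      have hcard' : Fintype.card {v : V // v ≠ ℓ} ≤ n := by
        have h0 := Fintype.card_subtype_lt (p := fun v => v ≠ ℓ) (x := ℓ) (by simp)
        have h2 : Fintype.card {x // (fun v => v ≠ ℓ) x} = Fintype.card {v : V // v ≠ ℓ} := rfl
        omega
      obtain ⟨M0⟩ := ih {v : V // v ≠ ℓ}
        (G.comap (Subtype.val : {v : V // v ≠ ℓ} → V)) hcard' hT' hdeg'
      exact extend_model hadjℓ hu₀ℓ hT.isConnected (hdeg u₀) M0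

theorem stmt_0 {V : Type*} [Fintype V] (G : SimpleGraph V) [DecidableRel G.Adj]
    (hT : G.IsTree) (hdeg : ∀ v, G.degree v ≤ 4) :
    Nonempty (SModel G) := by
  exact aux_smodel (Fintype.card V) V G le_rfl hT hdeg
end

section
/- Let φ be an s-model of a finite tree T with maximum degree at most 4, let v be a vertex of T with a neighbor p, and let u1 and u2 be two distinct neighbors of v both different from p. Then b^ℓ_φ(p,v) ≥ 1 + min(b^ℓ_φ(v,u1), b^ℓ_φ(v,u2)); in particular at most one neighbor u of v with u ≠ p satisfies that φ(p), φ(v), φ(u) are collinear. -/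
open SimpleGraph

section MyAux
open SimpleGraph Walk

variable {V : Type*}

private lemma myBendVertices_cons3 (φ : V → ℤ × ℤ) (a b c : V) (rest : List V) :
    bendVertices φ (a :: b :: c :: rest) =
      (if bendAt φ a b c then [b] else []) ++ bendVertices φ (b :: c :: rest) := rfl

private lemma myBendVertices_len (φ : V → ℤ × ℤ) :
    ∀ L : List V, (bendVertices φ L).length ≤ L.length
  | [] => by simp [bendVertices]
  | [a] => by simp [bendVertices]
  | [a, b] => by simp [bendVertices]
  | a :: b :: c :: rest => by
      have := myBendVertices_len φ (b :: c :: rest)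
      rw [myBendVertices_cons3]
      simp only [List.length_append, List.length_cons] at *
      split <;> simp <;> omega

private lemma myPathSecond [DecidableEq V] {G : SimpleGraph V} (hac : G.IsAcyclic) {v f w : V}
    (W : G.Walk v f) (hW : W.IsPath) (hmem : w ∈ W.support) (h : G.Adj v w) :
    W = Walk.cons h (W.dropUntil w hmem) := by
  classical
  have hQ : W.takeUntil w hmem = Walk.cons h Walk.nil := by
    have h1 : (W.takeUntil w hmem).IsPath := hW.takeUntil hmem
    have h2 := hac.path_unique ⟨W.takeUntil w hmem, h1⟩ (SimpleGraph.Path.singleton h)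
    simpa [SimpleGraph.Path.singleton] using congrArg Subtype.val h2
  conv_lhs => rw [← W.take_spec hmem]
  rw [hQ, Walk.cons_append, Walk.nil_append]

private lemma mySecondEq [DecidableEq V] {G : SimpleGraph V} (hac : G.IsAcyclic) {v f a b : V}
    (W : G.Walk v f) (hW : W.IsPath) (ha : a ∈ W.support) (hb : b ∈ W.support)
    (hva : G.Adj v a) (hvb : G.Adj v b) : a = b := by
  classical
  have h1 := congrArg Walk.support (myPathSecond hac W hW ha hva)
  have h2 := congrArg Walk.support (myPathSecond hac W hW hb hvb)
  rw [Walk.support_cons, (W.dropUntil a ha).support_eq_cons] at h1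
  rw [Walk.support_cons, (W.dropUntil b hb).support_eq_cons] at h2
  rw [h1] at h2
  simp only [List.cons.injEq] at h2
  exact h2.2.1

private lemma myExistsLeafPath [Fintype V] {G : SimpleGraph V} [DecidableRel G.Adj]
    (hT : G.IsTree) {v u : V} (hvu : G.Adj v u) :
    ∃ (f : V) (W : G.Walk v f), W.IsPath ∧ G.degree f = 1 ∧ u ∈ W.support := by
  classical
  set S : Set ℕ :=
    {n | ∃ (f : V) (W : G.Walk v f), W.IsPath ∧ u ∈ W.support ∧ W.length = n} with hS
  have hbdd : BddAbove S := by
    refine ⟨Fintype.card V, fun n hn => ?_⟩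
    obtain ⟨f, W, hp, -, rfl⟩ := hn
    have h1 := hp.support_nodup.length_le_card
    rw [Walk.length_support] at h1
    omega
  have hone : (Walk.cons hvu Walk.nil).IsPath := by
    simp [Walk.isPath_def, hvu.ne]
  have hne : S.Nonempty := ⟨1, u, Walk.cons hvu Walk.nil, hone, by simp, by simp⟩
  obtain ⟨f, W, hp, hu, hlen⟩ := Nat.sSup_mem hne hbdd
  refine ⟨f, W, hp, ?_, hu⟩
  by_contra hdeg
  have hfv : v ≠ f := by
    rintro rfl
    rw [Walk.isPath_iff_eq_nil] at hp
    subst hp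
    simp at hu
    exact hvu.ne' hu
  obtain ⟨x, hfx, W', hW'⟩ := Walk.exists_eq_cons_of_ne (Ne.symm hfv) W.reverse
  have hxmem : x ∈ G.neighborFinset f := by rw [SimpleGraph.mem_neighborFinset]; exact hfx
  have hcard : 1 < (G.neighborFinset f).card := by
    have h0 : 0 < (G.neighborFinset f).card := Finset.card_pos.mpr ⟨x, hxmem⟩
    have : G.degree f ≠ 1 := hdeg
    rw [SimpleGraph.degree] at this
    omega
  obtain ⟨y, hymem, hyx⟩ := Finset.exists_mem_ne hcard x
  have hfy : G.Adj f y := (SimpleGraph.mem_neighborFinset _ _ _).mp hymem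
  have hynotmem : y ∉ W.support := by
    intro hy'
    have hyrev : y ∈ W.reverse.support := by
      rw [Walk.support_reverse]; exact List.mem_reverse.mpr hy'
    have hxrev : x ∈ W.reverse.support := by rw [hW']; simp
    exact hyx (mySecondEq hT.IsAcyclic W.reverse hp.reverse hyrev hxrev hfy hfx)
  have hpath2 : (W.concat hfy).IsPath := by
    rw [← Walk.reverse_reverse (W.concat hfy)]
    rw [Walk.reverse_concat]
    refine Walk.IsPath.reverse ?_
    refine hp.reverse.cons ?_
    rw [Walk.support_reverse]
    exact fun h => hynotmem (List.mem_reverse.mp h)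
  have humem2 : u ∈ (W.concat hfy).support := by
    rw [Walk.support_concat]
    exact List.mem_append_left _ hu
  have hmem2 : W.length + 1 ∈ S :=
    ⟨y, W.concat hfy, hpath2, humem2, by rw [Walk.length_concat]⟩
  have := le_csSup hbdd hmem2
  rw [hlen] at this
  omega

private lemma myLeafBendBdd [Fintype V] {G : SimpleGraph V} [DecidableRel G.Adj]
    (M : SModel G) (p v : V) :
    BddAbove {n | ∃ (f : V) (W : G.Walk p f), W.IsPath ∧ G.degree f = 1 ∧ v ∈ W.support ∧
      bends M.toFun W.support = n} := by
  refine ⟨Fintype.card V, fun n hn => ?_⟩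
  obtain ⟨f, W, hp, -, -, rfl⟩ := hn
  exact le_trans (myBendVertices_len _ _) hp.support_nodup.length_le_card

private lemma myNoBetween {G : SimpleGraph V} (M : SModel G) {v a b : V}
    (hva : G.Adj v a) (hvb : G.Adj v b) (hab : a ≠ b)
    (hmem : M.toFun a ∈ seg (M.toFun v) (M.toFun b)) : False := by
  have hsne : s(v, a) ≠ s(v, b) := by
    intro h
    rcases Sym2.eq_iff.mp h with ⟨-, h2⟩ | ⟨h1, -⟩
    · exact hab h2
    · exact hvb.ne h1
  have hmema : M.toFun a ∈ seg (M.toFun v) (M.toFun a) :=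
    ⟨Set.right_mem_uIcc, Set.right_mem_uIcc⟩
  obtain ⟨w, hw1, hw2, hw3⟩ := M.noCross hva hvb hsne (M.toFun a) ⟨hmema, hmem⟩
  have hwa : w = a := by
    rcases hw1 with rfl | rfl
    · exact M.inj hw3
    · rfl
  subst hwa
  rcases hw2 with rfl | rfl
  · exact hva.ne rfl
  · exact hab rfl

private lemma myOppositeSides {G : SimpleGraph V} (M : SModel G) {v a b : V}
    (hva : G.Adj v a) (hvb : G.Adj v b) (hab : a ≠ b)
    (ha1 : (M.toFun a).1 = (M.toFun v).1) (hb1 : (M.toFun b).1 = (M.toFun v).1) :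
    ¬(((M.toFun v).2 < (M.toFun a).2 ∧ (M.toFun v).2 < (M.toFun b).2) ∨
      ((M.toFun a).2 < (M.toFun v).2 ∧ (M.toFun b).2 < (M.toFun v).2)) := by
  rintro (⟨haa, hbb⟩ | ⟨haa, hbb⟩) <;> rcases le_total (M.toFun a).2 (M.toFun b).2 with hle | hle
  · exact myNoBetween M hva hvb hab
      ⟨by simp only [Set.mem_uIcc]; omega, by simp only [Set.mem_uIcc]; omega⟩
  · exact myNoBetween M hvb hva hab.symm
      ⟨by simp only [Set.mem_uIcc]; omega, by simp only [Set.mem_uIcc]; omega⟩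
  · exact myNoBetween M hvb hva hab.symm
      ⟨by simp only [Set.mem_uIcc]; omega, by simp only [Set.mem_uIcc]; omega⟩
  · exact myNoBetween M hva hvb hab
      ⟨by simp only [Set.mem_uIcc]; omega, by simp only [Set.mem_uIcc]; omega⟩

private lemma myOppositeSidesH {G : SimpleGraph V} (M : SModel G) {v a b : V}
    (hva : G.Adj v a) (hvb : G.Adj v b) (hab : a ≠ b)
    (ha1 : (M.toFun a).2 = (M.toFun v).2) (hb1 : (M.toFun b).2 = (M.toFun v).2) :
    ¬(((M.toFun v).1 < (M.toFun a).1 ∧ (M.toFun v).1 < (M.toFun b).1) ∨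
      ((M.toFun a).1 < (M.toFun v).1 ∧ (M.toFun b).1 < (M.toFun v).1)) := by
  rintro (⟨haa, hbb⟩ | ⟨haa, hbb⟩) <;> rcases le_total (M.toFun a).1 (M.toFun b).1 with hle | hle
  · exact myNoBetween M hva hvb hab
      ⟨by simp only [Set.mem_uIcc]; omega, by simp only [Set.mem_uIcc]; omega⟩
  · exact myNoBetween M hvb hva hab.symm
      ⟨by simp only [Set.mem_uIcc]; omega, by simp only [Set.mem_uIcc]; omega⟩
  · exact myNoBetween M hvb hva hab.symm
      ⟨by simp only [Set.mem_uIcc]; omega, by simp only [Set.mem_uIcc]; omega⟩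
  · exact myNoBetween M hva hvb hab
      ⟨by simp only [Set.mem_uIcc]; omega, by simp only [Set.mem_uIcc]; omega⟩

private lemma myCollinearUnique {G : SimpleGraph V} (M : SModel G) {p v : V}
    (hvp : G.Adj v p) :
    ∀ w1 w2 : V, G.Adj v w1 → G.Adj v w2 → w1 ≠ p → w2 ≠ p →
      collinearGrid (M.toFun p) (M.toFun v) (M.toFun w1) →
      collinearGrid (M.toFun p) (M.toFun v) (M.toFun w2) → w1 = w2 := by
  intro w1 w2 hw1 hw2 h1p h2p hc1 hc2
  by_contra hne
  have hax_p := M.axisAligned hvp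
  have hax_1 := M.axisAligned hw1
  have hax_2 := M.axisAligned hw2
  rcases hc1 with ⟨e1, e1'⟩ | ⟨e1, e1'⟩ <;> rcases hc2 with ⟨e2, e2'⟩ | ⟨e2, e2'⟩
  · -- both vertical
    have op1 := myOppositeSides M hvp hw1 (Ne.symm h1p) e1 e1'.symm
    have op2 := myOppositeSides M hvp hw2 (Ne.symm h2p) e2 e2'.symm
    have op3 := myOppositeSides M hw1 hw2 hne e1'.symm e2'.symm
    have hp2 : (M.toFun p).2 ≠ (M.toFun v).2 := by
      rcases hax_p with ⟨-, h⟩ | ⟨-, h⟩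
      · exact fun hh => h hh.symm
      · exact absurd e1.symm h
    have h12 : (M.toFun w1).2 ≠ (M.toFun v).2 := by
      rcases hax_1 with ⟨-, h⟩ | ⟨-, h⟩
      · exact fun hh => h hh.symm
      · exact absurd e1' h
    have h22 : (M.toFun w2).2 ≠ (M.toFun v).2 := by
      rcases hax_2 with ⟨-, h⟩ | ⟨-, h⟩
      · exact fun hh => h hh.symm
      · exact absurd e2' h
    omega
  · -- p,v vertical and horizontal at once: p = v
    exact hvp.ne' (M.inj (Prod.ext e1 e2))
  · exact hvp.ne' (M.inj (Prod.ext e2 e1))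
  · -- both horizontal
    have op1 := myOppositeSidesH M hvp hw1 (Ne.symm h1p) e1 e1'.symm
    have op2 := myOppositeSidesH M hvp hw2 (Ne.symm h2p) e2 e2'.symm
    have op3 := myOppositeSidesH M hw1 hw2 hne e1'.symm e2'.symm
    have hp2 : (M.toFun p).1 ≠ (M.toFun v).1 := by
      rcases hax_p with ⟨-, h⟩ | ⟨-, h⟩
      · exact absurd e1.symm h
      · exact fun hh => h hh.symm
    have h12 : (M.toFun w1).1 ≠ (M.toFun v).1 := by
      rcases hax_1 with ⟨-, h⟩ | ⟨-, h⟩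
      · exact absurd e1' h
      · exact fun hh => h hh.symm
    have h22 : (M.toFun w2).1 ≠ (M.toFun v).1 := by
      rcases hax_2 with ⟨-, h⟩ | ⟨-, h⟩
      · exact absurd e2' h
      · exact fun hh => h hh.symm
    omega

private lemma myBendAt {G : SimpleGraph V} (M : SModel G) {p v u : V}
    (hvp : G.Adj v p) (hvu : G.Adj v u)
    (h : ¬ collinearGrid (M.toFun p) (M.toFun v) (M.toFun u)) :
    bendAt M.toFun p v u := by
  have h1 := M.axisAligned hvp
  have h2 := M.axisAligned hvu
  unfold collinearGrid at h
  unfold bendAt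
  omega

private lemma myKey [Fintype V] {G : SimpleGraph V} [DecidableRel G.Adj] (hT : G.IsTree)
    (M : SModel G) {p v u : V} (hvp : G.Adj v p) (hvu : G.Adj v u) (hup : u ≠ p)
    (hncol : ¬ collinearGrid (M.toFun p) (M.toFun v) (M.toFun u)) :
    1 + leafBend M v u ≤ leafBend M p v := by
  classical
  obtain ⟨f0, W0, hW0, hf0, hu0⟩ := myExistsLeafPath hT hvu
  have hne : {n | ∃ (f : V) (W : G.Walk v f), W.IsPath ∧ G.degree f = 1 ∧ u ∈ W.support ∧
      bends M.toFun W.support = n}.Nonempty := ⟨_, f0, W0, hW0, hf0, hu0, rfl⟩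
  have hmem : leafBend M v u ∈ {n | ∃ (f : V) (W : G.Walk v f), W.IsPath ∧ G.degree f = 1 ∧
      u ∈ W.support ∧ bends M.toFun W.support = n} := Nat.sSup_mem hne (myLeafBendBdd M v u)
  obtain ⟨f, W, hW, hf, huW, hbW⟩ := hmem
  have hpW : p ∉ W.support := fun hp' =>
    hup (mySecondEq hT.IsAcyclic W hW huW hp' hvu hvp)
  have hWeq : W = Walk.cons hvu (W.dropUntil u huW) := myPathSecond hT.IsAcyclic W hW huW hvu
  have hsupp : W.support = v :: u :: (W.dropUntil u huW).support.tail := by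
    conv_lhs => rw [hWeq]
    rw [Walk.support_cons]
    congr 1
    exact (W.dropUntil u huW).support_eq_cons
  have hb : bendAt M.toFun p v u := myBendAt M hvp hvu hncol
  have hW2 : (Walk.cons hvp.symm W).IsPath := hW.cons hpW
  have hbends : bends M.toFun (Walk.cons hvp.symm W).support = 1 + bends M.toFun W.support := by
    rw [Walk.support_cons, hsupp]
    rw [show bends M.toFun (p :: v :: u :: (W.dropUntil u huW).support.tail) =
      (bendVertices M.toFun (p :: v :: u :: (W.dropUntil u huW).support.tail)).length from rfl]
    rw [myBendVertices_cons3, if_pos hb]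
    simp only [bends, List.length_append, List.length_cons, List.length_nil]
  have hvmem : v ∈ (Walk.cons hvp.symm W).support := by
    rw [Walk.support_cons]
    exact List.mem_cons_of_mem _ W.start_mem_support
  have hfinal : 1 + leafBend M v u ∈ {n | ∃ (f : V) (W : G.Walk p f), W.IsPath ∧
      G.degree f = 1 ∧ v ∈ W.support ∧ bends M.toFun W.support = n} :=
    ⟨f, Walk.cons hvp.symm W, hW2, hf, hvmem, by rw [hbends, hbW]⟩
  exact le_csSup (myLeafBendBdd M p v) hfinal

end MyAux

theorem stmt_3 {V : Type*} [Fintype V] (G : SimpleGraph V) [DecidableRel G.Adj]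
    (hT : G.IsTree) (hdeg : ∀ v, G.degree v ≤ 4) (M : SModel G)
    (p v u1 u2 : V) (hvp : G.Adj v p) (h1 : G.Adj v u1) (h2 : G.Adj v u2)
    (h12 : u1 ≠ u2) (h1p : u1 ≠ p) (h2p : u2 ≠ p) :
    1 + min (leafBend M v u1) (leafBend M v u2) ≤ leafBend M p v ∧
    ∀ w1 w2 : V, G.Adj v w1 → G.Adj v w2 → w1 ≠ p → w2 ≠ p →
      collinearGrid (M.toFun p) (M.toFun v) (M.toFun w1) →
      collinearGrid (M.toFun p) (M.toFun v) (M.toFun w2) → w1 = w2 := by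
  classical
  have part2 := myCollinearUnique M hvp
  refine ⟨?_, part2⟩
  by_cases hcol : collinearGrid (M.toFun p) (M.toFun v) (M.toFun u1)
  · have hncol2 : ¬ collinearGrid (M.toFun p) (M.toFun v) (M.toFun u2) := fun hc =>
      h12 (part2 u1 u2 h1 h2 h1p h2p hcol hc)
    calc 1 + min (leafBend M v u1) (leafBend M v u2) ≤ 1 + leafBend M v u2 := by
          exact Nat.add_le_add_left (min_le_right _ _) 1
      _ ≤ leafBend M p v := myKey hT M hvp h2 h2p hncol2
  · calc 1 + min (leafBend M v u1) (leafBend M v u2) ≤ 1 + leafBend M v u1 := by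
          exact Nat.add_le_add_left (min_le_left _ _) 1
      _ ≤ leafBend M p v := myKey hT M hvp h1 h1p hcol
end

section
/- Let T be a finite tree with maximum degree at most 4 and φ an s-model of T. If the ordered edge (p,v) of T is critical in φ, then b^ℓ_T(p,v) = b^ℓ_φ(p,v). -/
open SimpleGraph

section AuxBends

variable {V : Type*}

lemma bends_cons_cons_cons (φ : V → ℤ × ℤ) (a b c : V) (rest : List V) :
    bends φ (a :: b :: c :: rest) =
      (if bendAt φ a b c then 1 else 0) + bends φ (b :: c :: rest) := by
  simp only [bends, bendVertices, List.length_append]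
  split <;> simp

lemma bends_le_length (φ : V → ℤ × ℤ) : ∀ L : List V, bends φ L ≤ L.length
  | [] => by simp [bends, bendVertices]
  | [_] => by simp [bends, bendVertices]
  | [_, _] => by simp [bends, bendVertices]
  | a :: b :: c :: rest => by
      have ih := bends_le_length φ (b :: c :: rest)
      rw [bends_cons_cons_cons]
      simp only [List.length_cons] at ih ⊢
      split <;> omega

lemma bends_le_cons (φ : V → ℤ × ℤ) (a : V) : ∀ L : List V, bends φ L ≤ bends φ (a :: L)
  | [] => by simp [bends, bendVertices]
  | [_] => by simp [bends, bendVertices]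
  | b :: c :: rest => by rw [bends_cons_cons_cons]; split <;> omega

end AuxBends

section AuxWalk

open SimpleGraph Walk

variable {V : Type*} {G : SimpleGraph V}

lemma eq_of_length_zero {a b : V} (W : G.Walk a b) (h : W.length = 0) : a = b := by
  cases W with
  | nil => rfl
  | cons h' W0 => simp [Walk.length_cons] at h

lemma second_eq {a b c d : V} (h1 : G.Adj a b) (h2 : G.Adj a c) (W1 : G.Walk b d)
    (W2 : G.Walk c d) (he : Walk.cons h1 W1 = Walk.cons h2 W2) : b = c := by
  have h3 := congrArg (fun W : G.Walk a d => W.getVert 1) he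
  simpa [Walk.getVert_cons _ _ one_ne_zero] using h3

lemma second_vertex (hT : G.IsTree) {v f u : V} (huv : G.Adj v u) (W : G.Walk v f)
    (hW : W.IsPath) (hu : u ∈ W.support) : ∃ W' : G.Walk u f, W = Walk.cons huv W' := by
  classical
  cases W with
  | nil =>
    simp only [Walk.support_nil, List.mem_singleton] at hu
    exact absurd hu.symm huv.ne
  | @cons _ x _ h W0 =>
    by_cases hx : x = u
    · subst hx; exact ⟨W0, rfl⟩
    · exfalso
      have hu0 : u ∈ W0.support := by
        simp only [Walk.support_cons, List.mem_cons] at hu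
        rcases hu with h' | h'
        · exact absurd h'.symm huv.ne
        · exact h'
      obtain ⟨hW0, hvW0⟩ := (Walk.cons_isPath_iff h W0).mp hW
      have htk : (W0.takeUntil u hu0).IsPath := hW0.takeUntil hu0
      have hvtk : v ∉ (W0.takeUntil u hu0).support :=
        fun hv => hvW0 (Walk.support_takeUntil_subset _ hu0 hv)
      have hP1 : (Walk.cons h (W0.takeUntil u hu0)).IsPath := htk.cons hvtk
      have hP2 : (Walk.cons huv Walk.nil).IsPath := by simp [huv.ne]
      have heq := (hT.existsUnique_path v u).unique hP1 hP2
      have hlen := congrArg Walk.length heq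
      simp only [Walk.length_cons, Walk.length_nil] at hlen
      exact hx (eq_of_length_zero (W0.takeUntil u hu0) (by omega))

lemma not_mem_support (hT : G.IsTree) {p v f u : V} (hvp : G.Adj v p) (hvu : G.Adj v u)
    (hpu : p ≠ u) (W : G.Walk v f) (hW : W.IsPath) (hu : u ∈ W.support) : p ∉ W.support := by
  intro hp
  obtain ⟨W1, e1⟩ := second_vertex hT hvu W hW hu
  obtain ⟨W2, e2⟩ := second_vertex hT hvp W hW hp
  exact hpu (second_eq hvp hvu W2 W1 (e2.symm.trans e1))

lemma exists_leaf_path [Fintype V] [DecidableRel G.Adj] (hT : G.IsTree) {v u : V}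
    (hvu : G.Adj v u) :
    ∃ (f : V) (W : G.Walk v f), W.IsPath ∧ G.degree f = 1 ∧ u ∈ W.support := by
  classical
  have hne : (1 : ℕ) ∈ {n | ∃ (f : V) (R : G.Walk f v), R.IsPath ∧ u ∈ R.support ∧
      R.length = n} := ⟨u, Walk.cons hvu.symm Walk.nil, by simp [hvu.ne'], by simp, by simp⟩
  have hbdd : BddAbove {n | ∃ (f : V) (R : G.Walk f v), R.IsPath ∧ u ∈ R.support ∧
      R.length = n} := by
    refine ⟨Fintype.card V, ?_⟩
    rintro n ⟨f, R, hR, -, rfl⟩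
    exact hR.length_lt.le
  obtain ⟨f, R, hR, huR, hlen⟩ := Nat.sSup_mem ⟨1, hne⟩ hbdd
  cases R with
  | nil => exact absurd (by simpa using huR) hvu.ne'
  | @cons _ y _ h R0 =>
    refine ⟨f, (Walk.cons h R0).reverse, hR.reverse, ?_, by
      rw [Walk.support_reverse, List.mem_reverse]; exact huR⟩
    have hy : 0 < G.degree f := (G.degree_pos_iff_exists_adj f).mpr ⟨y, h⟩
    by_contra hdeg1
    have h2 : 1 < G.degree f := by omega
    obtain ⟨w, hwmem, hwy⟩ := Finset.exists_mem_ne h2 y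
    have hfw : G.Adj f w := by simpa using hwmem
    have hwR : w ∉ (Walk.cons h R0).support := by
      intro hw
      obtain ⟨R2, e2⟩ := second_vertex hT hfw (Walk.cons h R0) hR hw
      exact hwy (second_eq hfw h R2 R0 e2.symm)
    have hR' : (Walk.cons hfw.symm (Walk.cons h R0)).IsPath := hR.cons hwR
    have hmem : (Walk.cons hfw.symm (Walk.cons h R0)).length ∈
        {n | ∃ (f : V) (R : G.Walk f v), R.IsPath ∧ u ∈ R.support ∧ R.length = n} :=
      ⟨w, _, hR', by rw [Walk.support_cons]; exact List.mem_cons_of_mem _ huR, rfl⟩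
    have hle := le_csSup hbdd hmem
    simp only [Walk.length_cons] at hle hlen
    omega

end AuxWalk
section AuxGeom

open SimpleGraph

variable {V : Type*} {G : SimpleGraph V}

lemma sym2_ne {v a b : V} (hva : G.Adj v a) (hvb : G.Adj v b) (hab : a ≠ b) :
    s(v, a) ≠ s(v, b) := by
  intro h
  rcases Sym2.eq_iff.mp h with ⟨-, h2⟩ | ⟨h1, h2⟩
  · exact hab h2
  · exact hva.ne' h2

lemma seg_self_right (p q : ℤ × ℤ) : q ∈ seg p q :=
  ⟨Set.right_mem_uIcc, Set.right_mem_uIcc⟩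

lemma no_overlap (φ : SModel G) {v a b : V} (hva : G.Adj v a) (hvb : G.Adj v b) (hab : a ≠ b)
    (hmem : φ.toFun a ∈ seg (φ.toFun v) (φ.toFun b)) : False := by
  obtain ⟨w, hw1, hw2, hwr⟩ := φ.noCross hva hvb (sym2_ne hva hvb hab) (φ.toFun a)
    ⟨seg_self_right _ _, hmem⟩
  rcases hw1 with h1 | h1
  · rw [h1] at hwr; exact hva.ne (φ.inj hwr)
  · rcases hw2 with h2 | h2
    · exact hva.ne (h1.symm.trans h2).symm
    · exact hab (h1.symm.trans h2)

lemma same_side_vert (φ : SModel G) {v a b : V} (hva : G.Adj v a) (hvb : G.Adj v b)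
    (hab : a ≠ b) (h1 : (φ.toFun a).1 = (φ.toFun v).1) (h2 : (φ.toFun b).1 = (φ.toFun v).1)
    (hsame : 0 < ((φ.toFun a).2 - (φ.toFun v).2) * ((φ.toFun b).2 - (φ.toFun v).2)) :
    False := by
  rcases mul_pos_iff.mp hsame with ⟨ha, hb⟩ | ⟨ha, hb⟩
  · rcases le_total (φ.toFun a).2 (φ.toFun b).2 with hle | hle
    · exact no_overlap φ hva hvb hab
        ⟨by rw [h1]; exact Set.left_mem_uIcc, Set.mem_uIcc.mpr (Or.inl ⟨by omega, hle⟩)⟩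
    · exact no_overlap φ hvb hva hab.symm
        ⟨by rw [h2]; exact Set.left_mem_uIcc, Set.mem_uIcc.mpr (Or.inl ⟨by omega, hle⟩)⟩
  · rcases le_total (φ.toFun a).2 (φ.toFun b).2 with hle | hle
    · exact no_overlap φ hvb hva hab.symm
        ⟨by rw [h2]; exact Set.left_mem_uIcc, Set.mem_uIcc.mpr (Or.inr ⟨hle, by omega⟩)⟩
    · exact no_overlap φ hva hvb hab
        ⟨by rw [h1]; exact Set.left_mem_uIcc, Set.mem_uIcc.mpr (Or.inr ⟨hle, by omega⟩)⟩

lemma same_side_horiz (φ : SModel G) {v a b : V} (hva : G.Adj v a) (hvb : G.Adj v b)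
    (hab : a ≠ b) (h1 : (φ.toFun a).2 = (φ.toFun v).2) (h2 : (φ.toFun b).2 = (φ.toFun v).2)
    (hsame : 0 < ((φ.toFun a).1 - (φ.toFun v).1) * ((φ.toFun b).1 - (φ.toFun v).1)) :
    False := by
  rcases mul_pos_iff.mp hsame with ⟨ha, hb⟩ | ⟨ha, hb⟩
  · rcases le_total (φ.toFun a).1 (φ.toFun b).1 with hle | hle
    · exact no_overlap φ hva hvb hab
        ⟨Set.mem_uIcc.mpr (Or.inl ⟨by omega, hle⟩), by rw [h1]; exact Set.left_mem_uIcc⟩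
    · exact no_overlap φ hvb hva hab.symm
        ⟨Set.mem_uIcc.mpr (Or.inl ⟨by omega, hle⟩), by rw [h2]; exact Set.left_mem_uIcc⟩
  · rcases le_total (φ.toFun a).1 (φ.toFun b).1 with hle | hle
    · exact no_overlap φ hvb hva hab.symm
        ⟨Set.mem_uIcc.mpr (Or.inr ⟨hle, by omega⟩), by rw [h2]; exact Set.left_mem_uIcc⟩
    · exact no_overlap φ hva hvb hab
        ⟨Set.mem_uIcc.mpr (Or.inr ⟨hle, by omega⟩), by rw [h1]; exact Set.left_mem_uIcc⟩

lemma pigeon_sign {x y z : ℤ} (hx : x ≠ 0) (hy : y ≠ 0) (hz : z ≠ 0) :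
    0 < x * y ∨ 0 < x * z ∨ 0 < y * z := by
  rcases hx.lt_or_gt with hx | hx <;> rcases hy.lt_or_gt with hy | hy <;>
    rcases hz.lt_or_gt with hz | hz <;>
    first
      | exact Or.inl (mul_pos hx hy)
      | exact Or.inl (mul_pos_of_neg_of_neg hx hy)
      | exact Or.inr (Or.inl (mul_pos hx hz))
      | exact Or.inr (Or.inl (mul_pos_of_neg_of_neg hx hz))
      | exact Or.inr (Or.inr (mul_pos hy hz))
      | exact Or.inr (Or.inr (mul_pos_of_neg_of_neg hy hz))

lemma bend_exists (φ : SModel G) {p v a b : V} (hpv : G.Adj p v) (hva : G.Adj v a)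
    (hvb : G.Adj v b) (hpa : a ≠ p) (hpb : b ≠ p) (hab : a ≠ b) :
    bendAt φ.toFun p v a ∨ bendAt φ.toFun p v b := by
  by_contra hcon
  push_neg at hcon
  obtain ⟨hna, hnb⟩ := hcon
  rcases φ.axisAligned hpv with ⟨he, hne⟩ | ⟨he, hne⟩
  · -- p, v on a vertical line
    have hva2 : (φ.toFun v).2 ≠ (φ.toFun a).2 := fun h => hna (Or.inl ⟨he, h⟩)
    have hvb2 : (φ.toFun v).2 ≠ (φ.toFun b).2 := fun h => hnb (Or.inl ⟨he, h⟩)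
    have hva1 : (φ.toFun a).1 = (φ.toFun v).1 := by
      rcases φ.axisAligned hva with ⟨x1, x2⟩ | ⟨x1, x2⟩
      · exact x1.symm
      · exact absurd x1 hva2
    have hvb1 : (φ.toFun b).1 = (φ.toFun v).1 := by
      rcases φ.axisAligned hvb with ⟨x1, x2⟩ | ⟨x1, x2⟩
      · exact x1.symm
      · exact absurd x1 hvb2
    rcases pigeon_sign (x := (φ.toFun p).2 - (φ.toFun v).2)
        (y := (φ.toFun a).2 - (φ.toFun v).2) (z := (φ.toFun b).2 - (φ.toFun v).2)
        (sub_ne_zero.mpr hne) (sub_ne_zero.mpr (fun h => hva2 h.symm))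
        (sub_ne_zero.mpr (fun h => hvb2 h.symm)) with h | h | h
    · exact same_side_vert φ hpv.symm hva hpa.symm he hva1 h
    · exact same_side_vert φ hpv.symm hvb hpb.symm he hvb1 h
    · exact same_side_vert φ hva hvb hab hva1 hvb1 h
  · -- p, v on a horizontal line
    have hva1 : (φ.toFun v).1 ≠ (φ.toFun a).1 := fun h => hna (Or.inr ⟨he, h⟩)
    have hvb1 : (φ.toFun v).1 ≠ (φ.toFun b).1 := fun h => hnb (Or.inr ⟨he, h⟩)
    have hva2 : (φ.toFun a).2 = (φ.toFun v).2 := by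
      rcases φ.axisAligned hva with ⟨x1, x2⟩ | ⟨x1, x2⟩
      · exact absurd x1 hva1
      · exact x1.symm
    have hvb2 : (φ.toFun b).2 = (φ.toFun v).2 := by
      rcases φ.axisAligned hvb with ⟨x1, x2⟩ | ⟨x1, x2⟩
      · exact absurd x1 hvb1
      · exact x1.symm
    rcases pigeon_sign (x := (φ.toFun p).1 - (φ.toFun v).1)
        (y := (φ.toFun a).1 - (φ.toFun v).1) (z := (φ.toFun b).1 - (φ.toFun v).1)
        (sub_ne_zero.mpr hne) (sub_ne_zero.mpr (fun h => hva1 h.symm))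
        (sub_ne_zero.mpr (fun h => hvb1 h.symm)) with h | h | h
    · exact same_side_horiz φ hpv.symm hva hpa.symm he hva2 h
    · exact same_side_horiz φ hpv.symm hvb hpb.symm he hvb2 h
    · exact same_side_horiz φ hva hvb hab hva2 hvb2 h

end AuxGeom
section AuxLeafBend

open SimpleGraph

variable {V : Type*} [Fintype V] {G : SimpleGraph V} [DecidableRel G.Adj]

lemma leafBend_bdd (φ : SModel G) (p v : V) :
    BddAbove {n | ∃ (f : V) (W : G.Walk p f), W.IsPath ∧ G.degree f = 1 ∧ v ∈ W.support ∧
      bends φ.toFun W.support = n} := by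
  refine ⟨Fintype.card V, ?_⟩
  rintro n ⟨f, W, hW, -, -, rfl⟩
  calc bends φ.toFun W.support ≤ W.support.length := bends_le_length _ _
    _ = W.length + 1 := W.length_support
    _ ≤ Fintype.card V := hW.length_lt

lemma leafBend_le (hT : G.IsTree) (φ : SModel G) {p v u : V} (hpv : G.Adj p v)
    (hvu : G.Adj v u) (hpu : p ≠ u) : leafBend φ v u ≤ leafBend φ p v := by
  unfold leafBend
  refine csSup_le' ?_
  rintro n ⟨f, W, hW, hf, huW, rfl⟩
  have hpW : p ∉ W.support := not_mem_support hT hpv.symm hvu hpu W hW huW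
  have hW' : (Walk.cons hpv W).IsPath := hW.cons hpW
  have hmem : bends φ.toFun (Walk.cons hpv W).support ∈
      {n | ∃ (f : V) (W' : G.Walk p f), W'.IsPath ∧ G.degree f = 1 ∧ v ∈ W'.support ∧
        bends φ.toFun W'.support = n} :=
    ⟨f, Walk.cons hpv W, hW', hf, by
      rw [Walk.support_cons]; exact List.mem_cons_of_mem _ W.start_mem_support, rfl⟩
  refine le_trans ?_ (le_csSup (leafBend_bdd φ p v) hmem)
  rw [Walk.support_cons]
  exact bends_le_cons _ _ _

lemma leafBend_bend_le (hT : G.IsTree) (φ : SModel G) {p v u : V} (hpv : G.Adj p v)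
    (hvu : G.Adj v u) (hpu : p ≠ u) (hbend : bendAt φ.toFun p v u) :
    leafBend φ v u + 1 ≤ leafBend φ p v := by
  obtain ⟨f0, W0, hW0, hf0, hu0⟩ := exists_leaf_path hT hvu
  have hsup : leafBend φ v u ∈ {n | ∃ (f : V) (W : G.Walk v f), W.IsPath ∧
      G.degree f = 1 ∧ u ∈ W.support ∧ bends φ.toFun W.support = n} := by
    unfold leafBend
    exact Nat.sSup_mem ⟨_, ⟨f0, W0, hW0, hf0, hu0, rfl⟩⟩ (leafBend_bdd φ v u)
  obtain ⟨f, W, hW, hf, huW, hb⟩ := hsup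
  obtain ⟨W1, hWe⟩ := second_vertex hT hvu W hW huW
  subst hWe
  have hpW : p ∉ (Walk.cons hvu W1).support := not_mem_support hT hpv.symm hvu hpu _ hW huW
  have hW' : (Walk.cons hpv (Walk.cons hvu W1)).IsPath := hW.cons hpW
  have hb' : bends φ.toFun (Walk.cons hpv (Walk.cons hvu W1)).support = leafBend φ v u + 1 := by
    obtain ⟨tail, htail⟩ : ∃ t, W1.support = u :: t := ⟨W1.support.tail, W1.support_eq_cons⟩
    rw [Walk.support_cons, htail] at hb
    rw [Walk.support_cons, Walk.support_cons, htail]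
    rw [bends_cons_cons_cons, if_pos hbend]
    omega
  have hmem : leafBend φ v u + 1 ∈ {n | ∃ (f : V) (W' : G.Walk p f), W'.IsPath ∧
      G.degree f = 1 ∧ v ∈ W'.support ∧ bends φ.toFun W'.support = n} :=
    ⟨f, _, hW', hf, by
      rw [Walk.support_cons]
      exact List.mem_cons_of_mem _ (Walk.cons hvu W1).start_mem_support, hb'⟩
  exact le_csSup (leafBend_bdd φ p v) hmem

lemma crit_le (hT : G.IsTree) (M φ : SModel G) (p : V) (ou : Option V)
    (hc : Critical M p ou) : optVal M p ou ≤ optVal φ p ou := by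
  induction hc with
  | base q => exact le_refl _
  | top1 q w u1 u2 hadj htop hb hcc ih =>
    cases u1 with
    | none =>
      simp only [optVal] at hb
      omega
    | some a =>
      have hva : G.Adj w a := by cases u2 <;> exact htop.1
      have hap : a ≠ q := by cases u2 <;> exact htop.2.1
      simp only [optVal] at hb ih ⊢
      have h1 : leafBend φ w a ≤ leafBend φ q w := leafBend_le hT φ hadj hva (Ne.symm hap)
      omega
  | top2 q w u1 u2 hadj htop hb hc1 hc2 ih1 ih2 =>
    cases u2 with
    | none =>
      simp only [optVal] at hb ⊢
      omega
    | some b =>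
      cases u1 with
      | none => exact absurd htop.1 (by simp)
      | some a =>
        obtain ⟨hva, hap, hvb, hbp, hab, hba, -⟩ := htop
        simp only [optVal] at hb ih1 ih2 ⊢
        rcases bend_exists φ hadj hva hvb hap hbp hab with hbd | hbd
        · have hx := leafBend_bend_le hT φ hadj hva (Ne.symm hap) hbd
          omega
        · have hx := leafBend_bend_le hT φ hadj hvb (Ne.symm hbp) hbd
          omega

end AuxLeafBend

theorem stmt_4 {V : Type*} [Fintype V] (G : SimpleGraph V) [DecidableRel G.Adj]
    (hT : G.IsTree) (hdeg : ∀ v, G.degree v ≤ 4) (M : SModel G)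
    (p v : V) (hpv : G.Adj p v) (hcrit : Critical M p (some v)) :
    leafBendMin G p v = leafBend M p v := by
  have key : ∀ φ : SModel G, leafBend M p v ≤ leafBend φ p v := by
    intro φ
    have h := crit_le hT M φ p (some v) hcrit
    simp only [optVal] at h
    exact_mod_cast h
  unfold leafBendMin
  apply le_antisymm
  · exact Nat.sInf_le ⟨M, rfl⟩
  · obtain ⟨φ, hφ⟩ := Nat.sInf_mem (⟨leafBend M p v, M, rfl⟩ :
      Set.Nonempty {n | ∃ M' : SModel G, leafBend M' p v = n})
    rw [← hφ]
    exact key φ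
end
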